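/- Let m, v ∈ ℝ³ with |m| = 1 and m · v = 0, let k > 0, and define m⁺ = (m + k v)/|m + k v|. Then |m⁺ - m - k v| ≤ (1/2) k² |v|². -/

import Mathlib

open scoped RealInnerProductSpace

noncomputable def cross3 (a b : EuclideanSpace ℝ (Fin 3)) : EuclideanSpace ℝ (Fin 3) :=
  WithLp.toLp 2 ![a 1 * b 2 - a 2 * b 1, a 2 * b 0 - a 0 * b 2, a 0 * b 1 - a 1 * b 0]

theorem renormalization_second_order (m v : EuclideanSpace ℝ (Fin 3)) (hm : ‖m‖ = 1)
    (hmv : ⟪m, v⟫ = 0) (k : ℝ) (hk : 0 < k)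
    (mplus : EuclideanSpace ℝ (Fin 3)) (hmp : mplus = ‖m + k • v‖⁻¹ • (m + k • v)) :
    ‖mplus - m - k • v‖ ≤ (1 / 2) * k ^ 2 * ‖v‖ ^ 2 := by
  set w := m + k • v with hw
  have hwsq : ‖w‖ ^ 2 = 1 + k ^ 2 * ‖v‖ ^ 2 := by
    rw [hw, norm_add_sq_real, hm, norm_smul, real_inner_smul_right, hmv]
    simp [abs_of_pos hk, mul_pow]
  have hw1 : (1:ℝ) ≤ ‖w‖ := by
    nlinarith [norm_nonneg w, sq_nonneg (k * ‖v‖), norm_nonneg v]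
  have hwne : ‖w‖ ≠ 0 := by linarith
  have key : mplus - m - k • v = (‖w‖⁻¹ - 1) • w := by
    rw [hmp, sub_smul, one_smul, hw]
    abel
  rw [key, norm_smul, Real.norm_eq_abs, abs_of_nonpos (by
    have : ‖w‖⁻¹ ≤ 1 := by
      rw [inv_le_one_iff₀]; right; exact hw1
    linarith)]
  have : (1 - ‖w‖⁻¹) * ‖w‖ = ‖w‖ - 1 := by
    field_simp
  rw [neg_sub, this]
  nlinarith [hw1]
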